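/- Let n, ℓ, δ be positive integers with 2δ < ℓ ≤ n/2 and ℓ ∣ n. The marker code D_δ(ℓ,n) detects up to δ deletions per block: for all x, x′ ∈ D_δ(ℓ,n), if a δ-per-block deletion output of x with deletion pattern d equals, as a string, a δ-per-block deletion output of x′ with deletion pattern d′, then d = d′. -/

import Mathlib

/-- The `i`-th bit (0-indexed) of `x ∈ 𝔽₂ⁿ`, with default `false` out of range. -/
def bitAt (n : ℕ) (x : Fin n → Bool) (i : ℕ) : Bool :=
  if h : i < n then x ⟨i, h⟩ else false

/-- The `j`-th block (1-indexed, of length `ℓ`) of `x ∈ 𝔽₂ⁿ`, as a list. -/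
def blockList (n ℓ : ℕ) (x : Fin n → Bool) (j : ℕ) : List Bool :=
  (List.range ℓ).map (fun i => bitAt n x ((j - 1) * ℓ + i))

/-- `y` is a `δ`-per-block deletion output of `x` with deletion pattern `d`:
`y = ⟨y¹,…,y^b⟩` where each `y^j` is a subsequence of block `j` of `x`
of length `ℓ - d j`, with `d j ≤ δ`. -/
def IsDelOutput (n ℓ δ : ℕ) (x : Fin n → Bool) (d : ℕ → ℕ) (y : List Bool) : Prop :=
  ∃ ys : ℕ → List Bool,
    (∀ j ∈ Finset.Icc 1 (n / ℓ),
      (ys j).Sublist (blockList n ℓ x j) ∧ d j ≤ δ ∧ (ys j).length = ℓ - d j) ∧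
    y = ((List.range (n / ℓ)).map (fun j => ys (j + 1))).flatten

/-- `C ⊆ 𝔽₂ⁿ` detects up to `δ` deletions per block. -/
def Detects (n ℓ δ : ℕ) (C : Set (Fin n → Bool)) : Prop :=
  ∀ x ∈ C, ∀ x' ∈ C, ∀ d d' : ℕ → ℕ, ∀ y : List Bool,
    IsDelOutput n ℓ δ x d y → IsDelOutput n ℓ δ x' d' y →
    ∀ j ∈ Finset.Icc 1 (n / ℓ), d j = d' j

/-- The 0-indexed starting position `α_j - 1` of block `j` in the output,
given the deletion pattern `d`. -/
def startIdx (ℓ : ℕ) (d : ℕ → ℕ) (j : ℕ) : ℕ :=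
  ∑ m ∈ Finset.Icc 1 (j - 1), (ℓ - d m)

/-- The window `(y_{α_j},…,y_{α_j+ℓ-1})` of length `ℓ` of the list `y`
starting at 0-indexed position `s = α_j - 1`. -/
def window (ℓ : ℕ) (y : List Bool) (s : ℕ) : Fin ℓ → Bool :=
  fun i => y.getD (s + i) false

/-- `C` is block-by-block decodable. -/
def BlockDecodable (n ℓ δ : ℕ) (C : Set (Fin n → Bool)) : Prop :=
  ∃ f : ℕ → (Fin ℓ → Bool) → ℕ,
    (∀ j w, f j w ≤ δ) ∧
    ∀ x ∈ C, ∀ d : ℕ → ℕ, ∀ y : List Bool, IsDelOutput n ℓ δ x d y →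
      ∀ j ∈ Finset.Icc 1 (n / ℓ - 1),
        f j (window ℓ y (startIdx ℓ d j)) = d j

/-- The marker code D_delta(l,n): the last d bits of blocks 1..b-1 are all 1
and the first d+1 bits of blocks 2..b are all 0. -/
def markerCode (n ℓ δ : ℕ) : Set (Fin n → Bool) :=
  {x | (∀ j ∈ Finset.Icc 1 (n / ℓ - 1), ∀ i ∈ Finset.Icc (ℓ - δ + 1) ℓ,
          bitAt n x ((j - 1) * ℓ + i - 1) = true) ∧
       (∀ j ∈ Finset.Icc 2 (n / ℓ), ∀ i ∈ Finset.Icc 1 (δ + 1),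
          bitAt n x ((j - 1) * ℓ + i - 1) = false)}

/-- Sum over `Icc 1 m` equals sum over `range m` shifted. -/
lemma icc_sum_eq_range (f : ℕ → ℕ) (m : ℕ) :
    ∑ i ∈ Finset.Icc 1 m, f i = ∑ i ∈ Finset.range m, f (i + 1) := by
  rw [← Finset.Ico_add_one_right_eq_Icc, Finset.sum_Ico_eq_sum_range]
  simp [add_comm]

lemma range_map_sum (f : ℕ → ℕ) (m : ℕ) :
    ((List.range m).map f).sum = ∑ i ∈ Finset.range m, f i := by
  induction m with
  | zero => simp
  | succ m ih => simp [List.range_succ, Finset.sum_range_succ, ih]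

/-- `startIdx` at the next block. -/
lemma startIdx_succ (ℓ : ℕ) (e : ℕ → ℕ) (j : ℕ) (h1 : 1 ≤ j) :
    startIdx ℓ e (j + 1) = startIdx ℓ e j + (ℓ - e j) := by
  obtain ⟨c, rfl⟩ : ∃ c, j = c + 1 := ⟨j - 1, by omega⟩
  simp only [startIdx, Nat.add_sub_cancel]
  exact Finset.sum_Icc_succ_top (by omega) _

/-- Sublist witnessed by an index map with bounds. -/
lemma sublist_bounds {α : Type*} {s t : List α} (h : s.Sublist t) :
    ∃ f : ℕ → ℕ, (∀ k, s[k]? = t[f k]?) ∧ (∀ k, k ≤ f k) ∧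
      (∀ k, k < s.length → f k ≤ k + (t.length - s.length)) := by
  obtain ⟨f, hf⟩ := List.sublist_iff_exists_orderEmbedding_getElem?_eq.mp h
  have hmono : ∀ k j, f k + j ≤ f (k + j) := by
    intro k j
    induction j with
    | zero => simp
    | succ j ih =>
      have h1 : f (k + j) < f (k + j + 1) := f.strictMono (Nat.lt_succ_self _)
      have h2 : k + (j + 1) = k + j + 1 := rfl
      rw [h2]; omega
  have hle : ∀ k, k ≤ f k := fun k => f.strictMono.le_apply
  refine ⟨f, hf, hle, ?_⟩
  intro k hk
  have hlen := h.length_le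
  have h1 : f k + (s.length - 1 - k) ≤ f (s.length - 1) := by
    have := hmono k (s.length - 1 - k)
    have hk' : k + (s.length - 1 - k) = s.length - 1 := by omega
    rwa [hk'] at this
  have h2 : f (s.length - 1) < t.length := by
    by_contra hcon
    push_neg at hcon
    have hnone : t[f (s.length - 1)]? = none := List.getElem?_eq_none_iff.mpr hcon
    have hsome : s[s.length - 1]? ≠ none := by
      rw [List.getElem?_eq_getElem (by omega)]; simp
    rw [hf (s.length - 1), hnone] at hsome
    exact hsome rfl
  omega

lemma blockList_length (n ℓ : ℕ) (x : Fin n → Bool) (j : ℕ) :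
    (blockList n ℓ x j).length = ℓ := by simp [blockList]

lemma blockList_get? (n ℓ : ℕ) (x : Fin n → Bool) (j m : ℕ) (hm : m < ℓ) :
    (blockList n ℓ x j)[m]? = some (bitAt n x ((j - 1) * ℓ + m)) := by
  simp [blockList, List.getElem?_range, hm]

/-- `getD` of a flattened list of lists, at an offset into block `j`. -/
lemma flatten_getD {α : Type*} (dflt : α) :
    ∀ (L : List (List α)) (j : ℕ) (hj : j < L.length) (k : ℕ), k < L[j].length →
      L.flatten.getD (((L.take j).map List.length).sum + k) dflt = L[j].getD k dflt := by
  intro L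
  induction L with
  | nil => intro j hj; simp at hj
  | cons l L ih =>
    intro j hj k hk
    cases j with
    | zero =>
      simp only [List.take_zero, List.map_nil, List.sum_nil, Nat.zero_add,
        List.flatten_cons, List.getElem_cons_zero] at *
      exact List.getD_append l L.flatten dflt k hk
    | succ j =>
      simp only [List.take_succ_cons, List.map_cons, List.sum_cons, List.flatten_cons,
        List.getElem_cons_succ] at *
      rw [Nat.add_assoc, List.getD_append_right l L.flatten dflt _ (Nat.le_add_right _ _),
        Nat.add_sub_cancel_left]
      exact ih j (by simp only [List.length_cons] at hj; omega) k hk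

/-- All the facts about one side of the detection argument. -/
lemma marker_side (n ℓ δ : ℕ) (hℓ : 2 * δ < ℓ) (x : Fin n → Bool)
    (hx : x ∈ markerCode n ℓ δ) (d : ℕ → ℕ) (y : List Bool)
    (h : IsDelOutput n ℓ δ x d y) :
    (∀ j, 1 ≤ j → j ≤ n / ℓ → d j ≤ δ) ∧
    (1 ≤ n / ℓ → y.length = startIdx ℓ d (n / ℓ) + (ℓ - d (n / ℓ))) ∧
    (∀ j k, 1 ≤ j → j + 1 ≤ n / ℓ → ℓ - δ ≤ k → k < ℓ - d j →
      y.getD (startIdx ℓ d j + k) false = true) ∧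
    (∀ j, 1 ≤ j → j + 1 ≤ n / ℓ →
      y.getD (startIdx ℓ d j + (ℓ - d j)) false = false) := by
  obtain ⟨ys, hys, hyeq⟩ := h
  obtain ⟨hx1, hx2⟩ := hx
  have hδℓ : δ < ℓ := by omega
  have hsub : ∀ j, 1 ≤ j → j ≤ n / ℓ → (ys j).Sublist (blockList n ℓ x j) :=
    fun j h1 h2 => (hys j (Finset.mem_Icc.mpr ⟨h1, h2⟩)).1
  have hdle : ∀ j, 1 ≤ j → j ≤ n / ℓ → d j ≤ δ :=
    fun j h1 h2 => (hys j (Finset.mem_Icc.mpr ⟨h1, h2⟩)).2.1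
  have hlen : ∀ j, 1 ≤ j → j ≤ n / ℓ → (ys j).length = ℓ - d j :=
    fun j h1 h2 => (hys j (Finset.mem_Icc.mpr ⟨h1, h2⟩)).2.2
  -- the length of the flattened prefix of `j - 1` blocks is `startIdx ℓ d j`
  have hA : ∀ j, 1 ≤ j → j ≤ n / ℓ →
      (((((List.range (n / ℓ)).map fun m => ys (m + 1)).take (j - 1)).map List.length).sum)
        = startIdx ℓ d j := by
    intro j h1 h2
    rw [← List.map_take, List.take_range, Nat.min_eq_left (by omega), List.map_map,
      range_map_sum]
    rw [startIdx, icc_sum_eq_range]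
    refine Finset.sum_congr rfl fun i hi => ?_
    have hi' := Finset.mem_range.mp hi
    exact hlen (i + 1) (by omega) (by omega)
  -- getD of y in block j
  have hflat : ∀ j k, 1 ≤ j → j ≤ n / ℓ → k < ℓ - d j →
      y.getD (startIdx ℓ d j + k) false = (ys j).getD k false := by
    intro j k h1 h2 hk
    have hjlt : j - 1 < ((List.range (n / ℓ)).map fun m => ys (m + 1)).length := by
      simp only [List.length_map, List.length_range]; omega
    have hget : ((List.range (n / ℓ)).map fun m => ys (m + 1))[j - 1]'hjlt = ys j := by
      simp only [List.getElem_map, List.getElem_range]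
      congr 1; omega
    have hk' : k < (((List.range (n / ℓ)).map fun m => ys (m + 1))[j - 1]'hjlt).length := by
      rw [hget, hlen j h1 h2]; exact hk
    have := flatten_getD false ((List.range (n / ℓ)).map fun m => ys (m + 1)) (j - 1) hjlt k hk'
    rw [hget, hA j h1 h2] at this
    rw [hyeq]
    exact this
  -- the "ones" fact
  have hone : ∀ j k, 1 ≤ j → j + 1 ≤ n / ℓ → ℓ - δ ≤ k → k < ℓ - d j →
      y.getD (startIdx ℓ d j + k) false = true := by
    intro j k h1 h2 hk1 hk2
    rw [hflat j k h1 (by omega) hk2]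
    obtain ⟨f, hf, hfl, hfu⟩ := sublist_bounds (hsub j h1 (by omega))
    have hslen := hlen j h1 (by omega)
    have htlen := blockList_length n ℓ x j
    have hd := hdle j h1 (by omega)
    have hk' : k < (ys j).length := by omega
    have hfu' := hfu k hk'
    rw [hslen, htlen] at hfu'
    have hfk : f k < ℓ := by omega
    have hget := hf k
    rw [blockList_get? n ℓ x j (f k) hfk] at hget
    have hmem1 : j ∈ Finset.Icc 1 (n / ℓ - 1) := Finset.mem_Icc.mpr ⟨h1, by omega⟩
    have hmem2 : f k + 1 ∈ Finset.Icc (ℓ - δ + 1) ℓ :=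
      Finset.mem_Icc.mpr ⟨by have := hfl k; omega, by omega⟩
    have hbit := hx1 j hmem1 (f k + 1) hmem2
    have hidx : (j - 1) * ℓ + (f k + 1) - 1 = (j - 1) * ℓ + f k := by omega
    rw [hidx] at hbit
    rw [List.getD_eq_getElem?_getD, hget, hbit]
    rfl
  refine ⟨hdle, ?_, hone, ?_⟩
  · -- total length
    intro h1
    rw [hyeq, List.length_flatten, List.map_map, range_map_sum]
    have e1 : ∑ i ∈ Finset.range (n / ℓ), (List.length ∘ fun m => ys (m + 1)) i
        = ∑ i ∈ Finset.Icc 1 (n / ℓ), (ℓ - d i) := by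
      rw [icc_sum_eq_range]
      refine Finset.sum_congr rfl fun i hi => ?_
      have hi' := Finset.mem_range.mp hi
      exact hlen (i + 1) (by omega) (by omega)
    rw [e1]
    have e2 : startIdx ℓ d (n / ℓ + 1) = ∑ i ∈ Finset.Icc 1 (n / ℓ), (ℓ - d i) := by
      simp [startIdx]
    rw [← e2, startIdx_succ ℓ d (n / ℓ) h1]
  · -- the "zeros" fact
    intro j h1 h2
    rw [← startIdx_succ ℓ d j h1]
    have hdj1 := hdle (j + 1) (by omega) (by omega)
    have h0 : (0 : ℕ) < ℓ - d (j + 1) := by omega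
    have := hflat (j + 1) 0 (by omega) (by omega) h0
    rw [Nat.add_zero] at this
    rw [this]
    obtain ⟨f, hf, hfl, hfu⟩ := sublist_bounds (hsub (j + 1) (by omega) (by omega))
    have hslen := hlen (j + 1) (by omega) (by omega)
    have htlen := blockList_length n ℓ x (j + 1)
    have h0' : (0 : ℕ) < (ys (j + 1)).length := by omega
    have hfu' := hfu 0 h0'
    rw [hslen, htlen] at hfu'
    have hfk : f 0 ≤ δ := by omega
    have hget := hf 0
    rw [blockList_get? n ℓ x (j + 1) (f 0) (by omega)] at hget
    have hmem1 : j + 1 ∈ Finset.Icc 2 (n / ℓ) := Finset.mem_Icc.mpr ⟨by omega, by omega⟩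
    have hmem2 : f 0 + 1 ∈ Finset.Icc 1 (δ + 1) := Finset.mem_Icc.mpr ⟨by omega, by omega⟩
    have hbit := hx2 (j + 1) hmem1 (f 0 + 1) hmem2
    have hidx : (j + 1 - 1) * ℓ + (f 0 + 1) - 1 = (j + 1 - 1) * ℓ + f 0 := by omega
    rw [hidx] at hbit
    rw [List.getD_eq_getElem?_getD, hget, hbit]
    rfl

/-- The marker code detects up to d deletions per block. -/
theorem markerCode_detects
    (n ℓ δ : ℕ) (hδ : 0 < δ) (hℓ : 2 * δ < ℓ) (hℓn : ℓ ≤ n / 2) (hdvd : ℓ ∣ n) :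
    Detects n ℓ δ (markerCode n ℓ δ) := by
  intro x hx x' hx' d d' y hy hy' j hj
  obtain ⟨hdle, hlen, hone, hzero⟩ := marker_side n ℓ δ hℓ x hx d y hy
  obtain ⟨hdle', hlen', hone', hzero'⟩ := marker_side n ℓ δ hℓ x' hx' d' y hy'
  obtain ⟨hj1, hjb⟩ := Finset.mem_Icc.mp hj
  have main : ∀ j, 1 ≤ j → j ≤ n / ℓ → d j = d' j := by
    intro j
    induction j using Nat.strong_induction_on with
    | _ j ih =>
      intro hj1 hjb
      have hS : startIdx ℓ d j = startIdx ℓ d' j := by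
        refine Finset.sum_congr rfl fun m hm => ?_
        have hm' := Finset.mem_Icc.mp hm
        rw [ih m (by omega) (by omega) (by omega)]
      by_cases hcase : j + 1 ≤ n / ℓ
      · by_contra hne
        have hd := hdle j hj1 (by omega)
        have hd' := hdle' j hj1 (by omega)
        rcases Nat.lt_or_ge (d j) (d' j) with hlt | hge
        · have h0 := hzero' j hj1 hcase
          have h1 := hone j (ℓ - d' j) hj1 hcase (by omega) (by omega)
          rw [hS] at h1
          rw [h1] at h0
          exact Bool.noConfusion h0
        · have hlt : d' j < d j := by omega
          have h0 := hzero j hj1 hcase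
          have h1 := hone' j (ℓ - d j) hj1 hcase (by omega) (by omega)
          rw [← hS] at h1
          rw [h1] at h0
          exact Bool.noConfusion h0
      · have hjb' : j = n / ℓ := by omega
        subst hjb'
        have e1 := hlen (by omega)
        have e2 := hlen' (by omega)
        have hd := hdle (n / ℓ) hj1 le_rfl
        have hd' := hdle' (n / ℓ) hj1 le_rfl
        rw [e1, hS] at e2
        omega
  exact main j hj1 hjb
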